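/- Let p₀₀, p₀₁, p₁₀, p₁₁ be strictly positive reals summing to 1, regarded as a joint distribution on {0,1}×{0,1}, with marginals a₀ = p₀₀ + p₀₁, a₁ = p₁₀ + p₁₁, b₀ = p₀₀ + p₁₀, b₁ = p₀₁ + p₁₁. For ε ∈ ℝ define the perturbed table q(ε) = (p₀₀ + ε, p₀₁ − ε, p₁₀ − ε, p₁₁ + ε). Then: (i) for every ε, q(ε) has the same marginals a₀, a₁, b₀, b₁ as p; and (ii) the function MI(ε) = ∑_{a,b ∈ {0,1}} q(ε)_{ab} · log( q(ε)_{ab} / (a_a · b_b) ) is differentiable at ε = 0 with derivative log( (p₀₀ · p₁₁) / (p₀₁ · p₁₀) ). -/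

import Mathlib

/-- Mutual information of the `ε`-perturbed 2×2 table
`q(ε) = (p₀₀+ε, p₀₁−ε, p₁₀−ε, p₁₁+ε)`, computed against the (unchanged)
marginals `a₀ = p₀₀+p₀₁`, `a₁ = p₁₀+p₁₁`, `b₀ = p₀₀+p₁₀`, `b₁ = p₀₁+p₁₁`. -/
noncomputable def mi2x2 (p00 p01 p10 p11 ε : ℝ) : ℝ :=
  (p00 + ε) * Real.log ((p00 + ε) / ((p00 + p01) * (p00 + p10))) +
  (p01 - ε) * Real.log ((p01 - ε) / ((p00 + p01) * (p01 + p11))) +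
  (p10 - ε) * Real.log ((p10 - ε) / ((p10 + p11) * (p00 + p10))) +
  (p11 + ε) * Real.log ((p11 + ε) / ((p10 + p11) * (p01 + p11)))

/-- For a strictly positive 2×2 joint distribution, the diagonal perturbation
`q(ε)` preserves both marginals for every `ε`, and the perturbed mutual
information `MI(ε)` is differentiable at `ε = 0` with derivative
`log((p₀₀·p₁₁)/(p₀₁·p₁₀))`. -/
theorem mi2x2_marginals_and_hasDerivAt (p00 p01 p10 p11 : ℝ)
    (h00 : 0 < p00) (h01 : 0 < p01) (h10 : 0 < p10) (h11 : 0 < p11)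
    (hsum : p00 + p01 + p10 + p11 = 1) :
    (∀ ε : ℝ,
      (p00 + ε) + (p01 - ε) = p00 + p01 ∧
      (p10 - ε) + (p11 + ε) = p10 + p11 ∧
      (p00 + ε) + (p10 - ε) = p00 + p10 ∧
      (p01 - ε) + (p11 + ε) = p01 + p11) ∧
    HasDerivAt (mi2x2 p00 p01 p10 p11)
      (Real.log ((p00 * p11) / (p01 * p10))) 0 := by
  refine ⟨fun ε => ⟨by ring, by ring, by ring, by ring⟩, ?_⟩
  have key : ∀ (p c : ℝ), 0 < p → 0 < c →
      HasDerivAt (fun x : ℝ => x * Real.log (x / c)) (Real.log (p / c) + 1) p := by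
    intro p c hp hc
    have h1 : HasDerivAt (fun x : ℝ => x * Real.log x - x * Real.log c)
        (Real.log p + 1 - Real.log c) p :=
      (Real.hasDerivAt_mul_log hp.ne').sub (by simpa using (hasDerivAt_id p).mul_const (Real.log c))
    have heq : (fun x : ℝ => x * Real.log (x / c)) =ᶠ[nhds p]
        (fun x : ℝ => x * Real.log x - x * Real.log c) := by
      filter_upwards [eventually_gt_nhds hp] with x hx
      rw [Real.log_div hx.ne' hc.ne']; ring
    have h2 := h1.congr_of_eventuallyEq heq
    have : Real.log (p / c) + 1 = Real.log p + 1 - Real.log c := by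
      rw [Real.log_div hp.ne' hc.ne']; ring
    rw [this]; exact h2
  have hplus : ∀ (p c : ℝ), 0 < p → 0 < c →
      HasDerivAt (fun ε : ℝ => (p + ε) * Real.log ((p + ε) / c)) (Real.log (p / c) + 1) 0 := by
    intro p c hp hc
    have hlin : HasDerivAt (fun ε : ℝ => p + ε) 1 0 := by
      simpa using (hasDerivAt_id (0 : ℝ)).const_add p
    have key' : HasDerivAt (fun x : ℝ => x * Real.log (x / c)) (Real.log (p / c) + 1)
        ((fun ε : ℝ => p + ε) 0) := by simpa using key p c hp hc
    have := key'.comp 0 hlin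
    simpa [Function.comp_def] using this
  have hminus : ∀ (p c : ℝ), 0 < p → 0 < c →
      HasDerivAt (fun ε : ℝ => (p - ε) * Real.log ((p - ε) / c)) (-(Real.log (p / c) + 1)) 0 := by
    intro p c hp hc
    have hlin : HasDerivAt (fun ε : ℝ => p - ε) (-1) 0 := by
      simpa using (hasDerivAt_id (0 : ℝ)).const_sub p
    have key' : HasDerivAt (fun x : ℝ => x * Real.log (x / c)) (Real.log (p / c) + 1)
        ((fun ε : ℝ => p - ε) 0) := by simpa using key p c hp hc
    have := key'.comp 0 hlin
    simpa [mul_comm, Function.comp_def] using this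
  have ha0 : (0:ℝ) < p00 + p01 := by linarith
  have ha1 : (0:ℝ) < p10 + p11 := by linarith
  have hb0 : (0:ℝ) < p00 + p10 := by linarith
  have hb1 : (0:ℝ) < p01 + p11 := by linarith
  have h1 := hplus p00 ((p00 + p01) * (p00 + p10)) h00 (mul_pos ha0 hb0)
  have h2 := hminus p01 ((p00 + p01) * (p01 + p11)) h01 (mul_pos ha0 hb1)
  have h3 := hminus p10 ((p10 + p11) * (p00 + p10)) h10 (mul_pos ha1 hb0)
  have h4 := hplus p11 ((p10 + p11) * (p01 + p11)) h11 (mul_pos ha1 hb1)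
  have hsumd := ((h1.add h2).add h3).add h4
  have hval : (Real.log (p00 / ((p00 + p01) * (p00 + p10))) + 1 +
      -(Real.log (p01 / ((p00 + p01) * (p01 + p11))) + 1) +
      -(Real.log (p10 / ((p10 + p11) * (p00 + p10))) + 1) +
      (Real.log (p11 / ((p10 + p11) * (p01 + p11))) + 1)) =
      Real.log ((p00 * p11) / (p01 * p10)) := by
    rw [Real.log_div h00.ne' (mul_pos ha0 hb0).ne',
        Real.log_div h01.ne' (mul_pos ha0 hb1).ne',
        Real.log_div h10.ne' (mul_pos ha1 hb0).ne',
        Real.log_div h11.ne' (mul_pos ha1 hb1).ne',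
        Real.log_mul ha0.ne' hb0.ne', Real.log_mul ha0.ne' hb1.ne',
        Real.log_mul ha1.ne' hb0.ne', Real.log_mul ha1.ne' hb1.ne',
        Real.log_div (mul_pos h00 h11).ne' (mul_pos h01 h10).ne',
        Real.log_mul h00.ne' h11.ne', Real.log_mul h01.ne' h10.ne']
    ring
  rw [← hval]
  exact hsumd.congr_of_eventuallyEq (by filter_upwards with ε; simp [mi2x2])
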